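/- arXiv:1703.07269 — 3 statements merged into one kernel-verified Lean document; each statement's English description precedes it below -/
import Mathlib

section
/- Let c_1,...,c_n ≥ 0 and b_1,...,b_n ∈ {0,1} with ∑_{j=1}^n b_j = m < n, and let 0 < a < 1. Then ∑_{k=1}^n a^{∑_{j=k}^n b_j} c_k ≤ ∑_{k=1}^{m} a^{m-k+1} c_k + ∑_{k=m+1}^n c_k. -/
theorem stmt_0 (n m : ℕ) (hmn : m < n) (a : ℝ) (ha : 0 < a) (ha1 : a < 1)
    (c : ℕ → ℝ) (hc : ∀ k, 0 ≤ c k)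
    (b : ℕ → ℕ) (hb : ∀ j, b j = 0 ∨ b j = 1)
    (hbm : ∑ j ∈ Finset.range n, b j = m) :
    ∑ k ∈ Finset.range n, a ^ (∑ j ∈ Finset.Ico k n, b j) * c k ≤
      ∑ k ∈ Finset.range m, a ^ (m - k) * c k + ∑ k ∈ Finset.Ico m n, c k := by
  have hmn' : m ≤ n := hmn.le
  rw [← Finset.sum_range_add_sum_Ico _ hmn']
  have hb1 : ∀ j, b j ≤ 1 := fun j => by rcases hb j with h | h <;> simp [h]
  have hsplit : ∀ k, k ≤ n →
      (∑ j ∈ Finset.range k, b j) + (∑ j ∈ Finset.Ico k n, b j) = m := fun k hk => by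
    rw [Finset.sum_range_add_sum_Ico _ hk, hbm]
  apply add_le_add
  · apply Finset.sum_le_sum
    intro k hk
    have hk' : k ≤ n := le_trans (Finset.mem_range.mp hk).le hmn'
    have h1 : ∑ j ∈ Finset.range k, b j ≤ k := by
      calc ∑ j ∈ Finset.range k, b j ≤ ∑ j ∈ Finset.range k, 1 :=
            Finset.sum_le_sum fun j _ => hb1 j
        _ = k := by simp
    have h2 : m - k ≤ ∑ j ∈ Finset.Ico k n, b j := by
      have := hsplit k hk'
      omega
    exact mul_le_mul_of_nonneg_right (pow_le_pow_of_le_one ha.le ha1.le h2) (hc k)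
  · apply Finset.sum_le_sum
    intro k hk
    have h1 : a ^ (∑ j ∈ Finset.Ico k n, b j) ≤ 1 := pow_le_one₀ ha.le ha1.le
    calc a ^ (∑ j ∈ Finset.Ico k n, b j) * c k ≤ 1 * c k :=
          mul_le_mul_of_nonneg_right h1 (hc k)
      _ = c k := one_mul _
end

section
/- Among all assignments b_1,...,b_n ∈ {0,1} with ∑ b_j = m, the assignment b_i = 1 for i ≤ m and b_i = 0 for i > m maximizes ∑_{k=1}^n a^{∑_{j=k}^n b_j} c_k, for any nonnegative c_k and 0 < a < 1. -/
theorem stmt_1 (n m : ℕ) (hmn : m ≤ n) (a : ℝ) (ha : 0 < a) (ha1 : a < 1)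
    (c : ℕ → ℝ) (hc : ∀ k, 0 ≤ c k)
    (b : ℕ → ℕ) (hb : ∀ j, b j = 0 ∨ b j = 1)
    (hbm : ∑ j ∈ Finset.range n, b j = m) :
    ∑ k ∈ Finset.range n, a ^ (∑ j ∈ Finset.Ico k n, b j) * c k ≤
      ∑ k ∈ Finset.range n,
        a ^ (∑ j ∈ Finset.Ico k n, (if j < m then 1 else 0)) * c k := by
  apply Finset.sum_le_sum
  intro k hk
  rw [Finset.mem_range] at hk
  have h1 : ∑ j ∈ Finset.Ico k n, (if j < m then 1 else 0) = m - k := by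
    rw [Finset.sum_ite, Finset.sum_const, Finset.sum_const]
    have : (Finset.Ico k n).filter (fun j => j < m) = Finset.Ico k m := by
      ext j; simp [Finset.mem_Ico]; omega
    simp [this]
  rw [h1]
  have hsplit : ∑ j ∈ Finset.range k, b j + ∑ j ∈ Finset.Ico k n, b j
      = ∑ j ∈ Finset.range n, b j := Finset.sum_range_add_sum_Ico _ hk.le
  have hsk : ∑ j ∈ Finset.range k, b j ≤ k := by
    calc ∑ j ∈ Finset.range k, b j ≤ ∑ _j ∈ Finset.range k, 1 :=
          Finset.sum_le_sum (fun j _ => by rcases hb j with h | h <;> omega)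
      _ = k := by simp
  have hexp : m - k ≤ ∑ j ∈ Finset.Ico k n, b j := by omega
  exact mul_le_mul_of_nonneg_right (pow_le_pow_of_le_one ha.le ha1.le hexp) (hc k)
end

section
/- Under the setting where F^m is the empirical average of m i.i.d. samples of uniformly bounded L-Lipschitz functions on a compact set P (each bounded in [l,u]), with x*_m a minimizer of F^m over P and x* a minimizer of F = E F^m over P, one has P(|F^m(x*_m) − F(x*)| ≥ δ) ≤ 2 K (D/ε)^p exp(−2m(δ−2Lε)²/(u−l)²) for 0 < ε < min{D, δ/(2L)}, where K = (√p)^p. -/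
open MeasureTheory Real Finset


private lemma aux_kernel {q h : ℝ} (hq0 : 0 ≤ q) (hq1 : q ≤ 1) (hh : 0 ≤ h) :
    1 - q + q * Real.exp h ≤ Real.exp (q * h + h ^ 2 / 8) := by
  have hDpos : ∀ x : ℝ, 0 < 1 - q + q * Real.exp x := by
    intro x
    rcases eq_or_lt_of_le hq0 with hq | hq
    · simp [← hq]
    · nlinarith [Real.exp_pos x, mul_pos hq (Real.exp_pos x)]
  set φ : ℝ → ℝ := fun x => q * x + x ^ 2 / 8 - Real.log (1 - q + q * Real.exp x) with hφdef
  set ψ : ℝ → ℝ := fun x => q + x / 4 - q * Real.exp x / (1 - q + q * Real.exp x) with hψdef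
  have hD : ∀ x : ℝ, HasDerivAt (fun y => 1 - q + q * Real.exp y) (q * Real.exp x) x := by
    intro x
    exact ((Real.hasDerivAt_exp x).const_mul q).const_add (1 - q)
  have hφ' : ∀ x, HasDerivAt φ (ψ x) x := by
    intro x
    have h1 : HasDerivAt (fun y : ℝ => q * y) q x := by
      simpa using (hasDerivAt_id x).const_mul q
    have h2 : HasDerivAt (fun y : ℝ => y ^ 2 / 8) (x / 4) x := by
      have h3 : HasDerivAt (fun y : ℝ => y ^ 2 / 8) _ x := (hasDerivAt_pow 2 x).div_const 8
      convert h3 using 1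
      push_cast
      ring
    have h3 : HasDerivAt (fun y => Real.log (1 - q + q * Real.exp y))
        (q * Real.exp x / (1 - q + q * Real.exp x)) x := (hD x).log (hDpos x).ne'
    exact (h1.add h2).sub h3
  have hψ' : ∀ x, HasDerivAt ψ
      (1 / 4 - (q * Real.exp x * (1 - q + q * Real.exp x) -
        q * Real.exp x * (q * Real.exp x)) / (1 - q + q * Real.exp x) ^ 2) x := by
    intro x
    have h1 : HasDerivAt (fun y : ℝ => q + y / 4) (1 / 4) x := by
      simpa using ((hasDerivAt_id x).div_const 4).const_add q
    have h2 : HasDerivAt (fun y => q * Real.exp y) (q * Real.exp x) x :=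
      (Real.hasDerivAt_exp x).const_mul q
    exact h1.sub (h2.div (hD x) (hDpos x).ne')
  have hψmono : Monotone ψ := by
    apply monotone_of_deriv_nonneg (fun x => (hψ' x).differentiableAt)
    intro x
    rw [(hψ' x).deriv]
    have hE := Real.exp_pos x
    have hD2 : 0 < (1 - q + q * Real.exp x) ^ 2 := pow_pos (hDpos x) 2
    rw [sub_nonneg, div_le_iff₀ hD2]
    nlinarith [sq_nonneg (1 - q - q * Real.exp x)]
  have hψ0 : ψ 0 = 0 := by
    simp only [hψdef, Real.exp_zero, mul_one]
    have : 1 - q + q = 1 := by ring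
    rw [this]
    simp
  have hφmono : MonotoneOn φ (Set.Ici (0 : ℝ)) := by
    apply monotoneOn_of_deriv_nonneg (convex_Ici 0)
    · exact fun x _ => ((hφ' x).differentiableAt.continuousAt).continuousWithinAt
    · exact fun x _ => ((hφ' x).differentiableAt).differentiableWithinAt
    · intro x hx
      rw [interior_Ici] at hx
      rw [(hφ' x).deriv]
      have := hψmono (le_of_lt hx)
      rw [hψ0] at this
      exact this
  have hφ0 : φ 0 = 0 := by
    simp only [hφdef, Real.exp_zero, mul_one, mul_zero]
    have : 1 - q + q = 1 := by ring
    rw [this]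
    simp
  have hkey := hφmono Set.self_mem_Ici (Set.mem_Ici.mpr hh) hh
  rw [hφ0] at hkey
  simp only [hφdef] at hkey
  have hlog : Real.log (1 - q + q * Real.exp h) ≤ q * h + h ^ 2 / 8 := by linarith
  calc 1 - q + q * Real.exp h = Real.exp (Real.log (1 - q + q * Real.exp h)) :=
        (Real.exp_log (hDpos h)).symm
    _ ≤ _ := Real.exp_le_exp.mpr hlog


private lemma aux_mgf {n : ℕ} [NeZero n] (X : Fin n → ℝ) (l u : ℝ) (hlu : l < u)
    (hX : ∀ j, l ≤ X j ∧ X j ≤ u) (lam : ℝ) (hlam : 0 ≤ lam)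
    (hker : ∀ q h : ℝ, 0 ≤ q → q ≤ 1 → 0 ≤ h →
      1 - q + q * Real.exp h ≤ Real.exp (q * h + h ^ 2 / 8)) :
    ∑ j, Real.exp (lam * (X j - (1 / n : ℝ) * ∑ j', X j')) ≤
      n * Real.exp (lam ^ 2 * (u - l) ^ 2 / 8) := by
  have hn : 0 < (n : ℝ) := by exact_mod_cast Nat.pos_of_ne_zero (NeZero.ne n)
  set μ : ℝ := (1 / n : ℝ) * ∑ j', X j' with hμdef
  have hS : ∑ j', X j' = n * μ := by rw [hμdef]; field_simp
  have hμl : l ≤ μ := by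
    have h1 : (n : ℝ) * l ≤ ∑ j', X j' := by
      calc (n : ℝ) * l = ∑ _j : Fin n, l := by simp [mul_comm]
        _ ≤ _ := Finset.sum_le_sum fun j _ => (hX j).1
    rw [hμdef]
    calc l = (1/n : ℝ) * ((n:ℝ) * l) := by field_simp
      _ ≤ _ := mul_le_mul_of_nonneg_left h1 (by positivity)
  have hμu : μ ≤ u := by
    have h1 : ∑ j', X j' ≤ (n : ℝ) * u := by
      calc (∑ j', X j') ≤ ∑ _j : Fin n, u := Finset.sum_le_sum fun j _ => (hX j).2
        _ = (n : ℝ) * u := by simp [mul_comm]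
    rw [hμdef]
    calc (1/n : ℝ) * ∑ j', X j' ≤ (1/n : ℝ) * ((n:ℝ) * u) :=
          mul_le_mul_of_nonneg_left h1 (by positivity)
      _ = u := by field_simp
  set w : ℝ := u - l with hwdef
  have hw : 0 < w := by simp [hwdef]; linarith
  set A : ℝ := Real.exp (lam * (l - μ)) with hA
  set B : ℝ := Real.exp (lam * (u - μ)) with hB
  have key : ∀ j, Real.exp (lam * (X j - μ)) ≤ (u - X j) / w * A + (X j - l) / w * B := by
    intro j
    have ha : 0 ≤ (u - X j) / w := div_nonneg (by linarith [(hX j).2]) hw.le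
    have hb : 0 ≤ (X j - l) / w := div_nonneg (by linarith [(hX j).1]) hw.le
    have hab : (u - X j) / w + (X j - l) / w = 1 := by field_simp; rw [hwdef]; ring
    have hcx := convexOn_exp.2 (Set.mem_univ (lam * (l - μ))) (Set.mem_univ (lam * (u - μ)))
      ha hb hab
    simp only [smul_eq_mul] at hcx
    have harg : (u - X j) / w * (lam * (l - μ)) + (X j - l) / w * (lam * (u - μ))
        = lam * (X j - μ) := by field_simp; ring
    rwa [harg] at hcx
  have hsum : ∑ j, Real.exp (lam * (X j - μ)) ≤ (n : ℝ) * ((u - μ) / w * A + (μ - l) / w * B) := by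
    calc ∑ j, Real.exp (lam * (X j - μ)) ≤ ∑ j, ((u - X j) / w * A + (X j - l) / w * B) :=
          Finset.sum_le_sum fun j _ => key j
      _ = ((n : ℝ) * u - ∑ j', X j') / w * A + ((∑ j', X j') - n * l) / w * B := by
          rw [Finset.sum_add_distrib]
          congr 1
          · rw [← Finset.sum_mul, ← Finset.sum_div]
            congr 2
            rw [Finset.sum_sub_distrib]
            simp [mul_comm]
          · rw [← Finset.sum_mul, ← Finset.sum_div]
            congr 2
            rw [Finset.sum_sub_distrib]
            simp [mul_comm]
      _ = (n : ℝ) * ((u - μ) / w * A + (μ - l) / w * B) := by rw [hS]; field_simp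
  set p : ℝ := (μ - l) / w with hpdef
  set hh : ℝ := lam * w with hhdef
  have hp0 : 0 ≤ p := div_nonneg (by linarith) hw.le
  have hp1 : p ≤ 1 := by rw [hpdef, div_le_one hw]; linarith
  have hh0 : 0 ≤ hh := mul_nonneg hlam hw.le
  have hAe : A = Real.exp (-(p * hh)) := by
    rw [hA]; congr 1; rw [hpdef, hhdef]; field_simp; ring
  have hBe : B = Real.exp (-(p * hh) + hh) := by
    rw [hB]; congr 1; rw [hpdef, hhdef]; field_simp; ring
  have h1p : (u - μ) / w = 1 - p := by rw [hpdef]; field_simp; ring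
  have hfinal : (u - μ) / w * A + (μ - l) / w * B ≤ Real.exp (lam ^ 2 * (u - l) ^ 2 / 8) := by
    rw [h1p, ← hpdef, hAe, hBe, Real.exp_add]
    have : (1 - p) * Real.exp (-(p * hh)) + p * (Real.exp (-(p * hh)) * Real.exp hh)
        = Real.exp (-(p * hh)) * (1 - p + p * Real.exp hh) := by ring
    rw [this]
    have hker2 := hker p hh hp0 hp1 hh0
    calc Real.exp (-(p * hh)) * (1 - p + p * Real.exp hh)
        ≤ Real.exp (-(p * hh)) * Real.exp (p * hh + hh ^ 2 / 8) := by
          apply mul_le_mul_of_nonneg_left hker2 (Real.exp_pos _).le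
      _ = Real.exp (hh ^ 2 / 8) := by rw [← Real.exp_add]; congr 1; ring
      _ = Real.exp (lam ^ 2 * (u - l) ^ 2 / 8) := by
          congr 1; rw [hhdef, hwdef]; ring
  calc ∑ j, Real.exp (lam * (X j - μ)) ≤ (n:ℝ) * ((u - μ) / w * A + (μ - l) / w * B) := hsum
    _ ≤ n * Real.exp (lam ^ 2 * (u - l) ^ 2 / 8) := by
        apply mul_le_mul_of_nonneg_left hfinal hn.le


private lemma aux_chernoff_one {n m : ℕ} [NeZero n] (hm : 0 < m) (X : Fin n → ℝ) (l u : ℝ)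
    (hlu : l < u) (hX : ∀ j, l ≤ X j ∧ X j ≤ u) (a : ℝ) (ha : 0 ≤ a)
    (hmgf : ∀ lam : ℝ, 0 ≤ lam →
      ∑ j, Real.exp (lam * (X j - (1 / n : ℝ) * ∑ j', X j')) ≤
        n * Real.exp (lam ^ 2 * (u - l) ^ 2 / 8)) :
    ((Finset.univ.filter fun ξ : Fin m → Fin n =>
        a ≤ (1 / m : ℝ) * (∑ i, X (ξ i)) - (1 / n : ℝ) * ∑ j, X j).card : ℝ) ≤
      (n : ℝ) ^ m * Real.exp (-(2 * m * a ^ 2) / (u - l) ^ 2) := by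
  have hn : 0 < (n : ℝ) := by exact_mod_cast Nat.pos_of_ne_zero (NeZero.ne n)
  have hmr : 0 < (m : ℝ) := by exact_mod_cast hm
  set μ : ℝ := (1 / n : ℝ) * ∑ j, X j with hμdef
  set w : ℝ := u - l with hwdef
  have hw : 0 < w := by simp [hwdef]; linarith
  set lam : ℝ := 4 * a / w ^ 2 with hlamdef
  have hlam : 0 ≤ lam := by positivity
  set T := Finset.univ.filter fun ξ : Fin m → Fin n =>
      a ≤ (1 / m : ℝ) * (∑ i, X (ξ i)) - μ with hT
  have hpt : ∀ ξ ∈ T, (1 : ℝ) ≤ Real.exp (lam * ((∑ i, (X (ξ i) - μ)) - m * a)) := by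
    intro ξ hξ
    rw [hT, Finset.mem_filter] at hξ
    apply Real.one_le_exp
    apply mul_nonneg hlam
    have h2 : (m : ℝ) * a ≤ (m : ℝ) * ((1 / m : ℝ) * (∑ i, X (ξ i)) - μ) :=
      mul_le_mul_of_nonneg_left hξ.2 hmr.le
    have h3 : (m : ℝ) * ((1 / m : ℝ) * (∑ i, X (ξ i)) - μ) = ∑ i, (X (ξ i) - μ) := by
      rw [Finset.sum_sub_distrib]
      simp [mul_sub, mul_comm]
      field_simp
    linarith [h2, h3.symm.le]
  have hstep : (T.card : ℝ) ≤
      ∑ ξ : Fin m → Fin n, Real.exp (lam * ((∑ i, (X (ξ i) - μ)) - m * a)) := by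
    calc (T.card : ℝ) = ∑ _ξ ∈ T, (1 : ℝ) := by simp
      _ ≤ ∑ ξ ∈ T, Real.exp (lam * ((∑ i, (X (ξ i) - μ)) - m * a)) :=
          Finset.sum_le_sum hpt
      _ ≤ ∑ ξ : Fin m → Fin n, Real.exp (lam * ((∑ i, (X (ξ i) - μ)) - m * a)) := by
          apply Finset.sum_le_sum_of_subset_of_nonneg (Finset.filter_subset _ _)
          intro ξ _ _
          positivity
  have hfact : ∀ ξ : Fin m → Fin n, Real.exp (lam * ((∑ i, (X (ξ i) - μ)) - m * a))
      = Real.exp (-(lam * m * a)) * ∏ i, Real.exp (lam * (X (ξ i) - μ)) := by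
    intro ξ
    rw [← Real.exp_sum, ← Real.exp_add]
    congr 1
    rw [mul_sub, Finset.mul_sum]
    ring
  have hprod : ∑ ξ : Fin m → Fin n, ∏ i, Real.exp (lam * (X (ξ i) - μ))
      = (∑ j, Real.exp (lam * (X j - μ))) ^ m := by
    have hps := Finset.prod_univ_sum (fun _ : Fin m => (univ : Finset (Fin n)))
      (fun _ j => Real.exp (lam * (X j - μ)))
    rw [Fintype.piFinset_univ] at hps
    rw [← hps]
    simp [Finset.prod_const]
  have hsum2 : ∑ ξ : Fin m → Fin n, Real.exp (lam * ((∑ i, (X (ξ i) - μ)) - m * a))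
      = Real.exp (-(lam * m * a)) * (∑ j, Real.exp (lam * (X j - μ))) ^ m := by
    simp only [hfact]
    rw [← Finset.mul_sum, hprod]
  have hmgf2 : (∑ j, Real.exp (lam * (X j - μ))) ^ m
      ≤ ((n : ℝ) * Real.exp (lam ^ 2 * w ^ 2 / 8)) ^ m := by
    apply pow_le_pow_left₀ (by positivity) (hmgf lam hlam)
  have hexp : Real.exp (-(lam * m * a)) * ((n : ℝ) * Real.exp (lam ^ 2 * w ^ 2 / 8)) ^ m
      = (n : ℝ) ^ m * Real.exp (-(2 * m * a ^ 2) / w ^ 2) := by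
    rw [mul_pow, ← Real.exp_nat_mul, ← mul_assoc, mul_comm (Real.exp _) ((n:ℝ)^m), mul_assoc,
      ← Real.exp_add]
    congr 2
    rw [hlamdef]
    field_simp
    ring
  calc (T.card : ℝ) ≤ ∑ ξ : Fin m → Fin n, Real.exp (lam * ((∑ i, (X (ξ i) - μ)) - m * a)) :=
        hstep
    _ = Real.exp (-(lam * m * a)) * (∑ j, Real.exp (lam * (X j - μ))) ^ m := hsum2
    _ ≤ Real.exp (-(lam * m * a)) * ((n : ℝ) * Real.exp (lam ^ 2 * w ^ 2 / 8)) ^ m := by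
        apply mul_le_mul_of_nonneg_left hmgf2 (Real.exp_pos _).le
    _ = (n : ℝ) ^ m * Real.exp (-(2 * m * a ^ 2) / w ^ 2) := hexp

private lemma aux_chernoff_abs {n m : ℕ} [NeZero n] (hm : 0 < m) (X : Fin n → ℝ) (l u : ℝ)
    (hlu : l < u) (hX : ∀ j, l ≤ X j ∧ X j ≤ u) (a : ℝ) (ha : 0 ≤ a) :
    ((Finset.univ.filter fun ξ : Fin m → Fin n =>
        a ≤ |(1 / m : ℝ) * (∑ i, X (ξ i)) - (1 / n : ℝ) * ∑ j, X j|).card : ℝ) ≤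
      2 * (n : ℝ) ^ m * Real.exp (-(2 * m * a ^ 2) / (u - l) ^ 2) := by
  have h1 := aux_chernoff_one hm X l u hlu hX a ha (fun lam hlam => aux_mgf X l u hlu hX lam hlam (fun _ _ hq0 hq1 hh0 => aux_kernel hq0 hq1 hh0))
  have hX2 : ∀ j, -u ≤ -X j ∧ -X j ≤ -l := fun j => ⟨by linarith [(hX j).2], by linarith [(hX j).1]⟩
  have hlu2 : -u < -l := by linarith
  have h2 := aux_chernoff_one hm (fun j => -X j) (-u) (-l) hlu2 hX2 a
    ha (fun lam hlam => aux_mgf (fun j => -X j) (-u) (-l) hlu2 hX2 lam hlam (fun _ _ hq0 hq1 hh0 => aux_kernel hq0 hq1 hh0))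
  have hww : (-l - -u) = u - l := by ring
  rw [hww] at h2
  set Z : (Fin m → Fin n) → ℝ :=
    fun ξ => (1 / m : ℝ) * (∑ i, X (ξ i)) - (1 / n : ℝ) * ∑ j, X j with hZ
  have hneg : ∀ ξ : Fin m → Fin n,
      (1 / m : ℝ) * (∑ i, (fun j => -X j) (ξ i)) - (1 / n : ℝ) * ∑ j, (fun j => -X j) j
      = -Z ξ := by
    intro ξ
    simp only [hZ, Finset.sum_neg_distrib]
    ring
  have hsub : (Finset.univ.filter fun ξ : Fin m → Fin n => a ≤ |Z ξ|) ⊆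
      (Finset.univ.filter fun ξ : Fin m → Fin n => a ≤ Z ξ) ∪
      (Finset.univ.filter fun ξ : Fin m → Fin n =>
        a ≤ (1 / m : ℝ) * (∑ i, (fun j => -X j) (ξ i)) - (1 / n : ℝ) * ∑ j, (fun j => -X j) j) := by
    intro ξ hξ
    simp only [Finset.mem_filter, Finset.mem_univ, true_and, Finset.mem_union] at *
    rcases le_abs.mp hξ with h | h
    · exact Or.inl h
    · right; rw [hneg ξ]; exact h
  calc ((Finset.univ.filter fun ξ : Fin m → Fin n => a ≤ |Z ξ|).card : ℝ)
      ≤ (((Finset.univ.filter fun ξ : Fin m → Fin n => a ≤ Z ξ) ∪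
      (Finset.univ.filter fun ξ : Fin m → Fin n =>
        a ≤ (1 / m : ℝ) * (∑ i, (fun j => -X j) (ξ i)) -
          (1 / n : ℝ) * ∑ j, (fun j => -X j) j)).card : ℝ) := by
        exact_mod_cast Nat.cast_le.mpr (Finset.card_le_card hsub)
    _ ≤ _ := by
        have := Finset.card_union_le
          (Finset.univ.filter fun ξ : Fin m → Fin n => a ≤ Z ξ)
          (Finset.univ.filter fun ξ : Fin m → Fin n =>
            a ≤ (1 / m : ℝ) * (∑ i, (fun j => -X j) (ξ i)) -
              (1 / n : ℝ) * ∑ j, (fun j => -X j) j)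
        have hcast : ((((Finset.univ.filter fun ξ : Fin m → Fin n => a ≤ Z ξ) ∪ _).card : ℕ) : ℝ)
            ≤ _ := Nat.cast_le.mpr this
        calc _ ≤ (((Finset.univ.filter fun ξ : Fin m → Fin n => a ≤ Z ξ).card : ℝ) +
              ((Finset.univ.filter fun ξ : Fin m → Fin n =>
                a ≤ (1 / m : ℝ) * (∑ i, (fun j => -X j) (ξ i)) -
                  (1 / n : ℝ) * ∑ j, (fun j => -X j) j).card : ℝ)) := by
              exact_mod_cast Nat.cast_le.mpr (Finset.card_union_le _ _)
          _ ≤ 2 * (n : ℝ) ^ m * Real.exp (-(2 * m * a ^ 2) / (u - l) ^ 2) := by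
              have := h1; have := h2; simp only [hZ] at *; linarith


private lemma aux_min_lip (u A B : ℝ) : |min u A - min u B| ≤ |A - B| := by
  refine le_trans (abs_min_sub_min_le_max u A u B) ?_
  simp

private lemma aux_coord {p : ℕ} (x y : EuclideanSpace ℝ (Fin p)) (j : Fin p) :
    |x j - y j| ≤ dist x y := by
  rw [EuclideanSpace.dist_eq]
  have h1 : |x j - y j| = Real.sqrt (dist (x j) (y j) ^ 2) := by
    rw [Real.sqrt_sq_eq_abs, Real.dist_eq, abs_abs]
  rw [h1]
  apply Real.sqrt_le_sqrt
  exact Finset.single_le_sum (f := fun i => dist (x i) (y i) ^ 2)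
    (fun i _ => sq_nonneg _) (Finset.mem_univ j)

private lemma aux_proj_cont {p : ℕ} (j : Fin p) :
    Continuous fun x : EuclideanSpace ℝ (Fin p) => x j :=
  (EuclideanSpace.proj (𝕜 := ℝ) j).continuous

-- net coordinate choice
private lemma aux_cell {s q D : ℝ} {k : ℕ} (hs : 0 < s) (hq0 : 0 ≤ q) (hqD : q ≤ D)
    (hD : D ≤ k * s) (hk : 1 ≤ k) :
    |q - ((min ⌊q / s⌋₊ (k - 1) : ℕ) + 1 / 2) * s| ≤ s / 2 := by
  set i : ℕ := min ⌊q / s⌋₊ (k - 1) with hi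
  have hbounds : (i : ℝ) * s ≤ q ∧ q ≤ ((i : ℕ) + 1 : ℝ) * s := by
    rcases le_or_gt ⌊q / s⌋₊ (k - 1) with h | h
    · have hieq : i = ⌊q / s⌋₊ := by rw [hi, min_eq_left h]
      constructor
      · rw [hieq]
        have := Nat.floor_le (by positivity : (0:ℝ) ≤ q / s)
        calc (⌊q / s⌋₊ : ℝ) * s ≤ (q / s) * s := by nlinarith
          _ = q := by field_simp
      · rw [hieq]
        have := Nat.lt_floor_add_one (q / s)
        have h2 : q / s < (⌊q / s⌋₊ : ℝ) + 1 := this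
        calc q = (q / s) * s := by field_simp
          _ ≤ ((⌊q / s⌋₊ : ℝ) + 1) * s := by nlinarith
    · have hieq : i = k - 1 := by rw [hi, min_eq_right h.le]
      have hks : (k : ℝ) ≤ q / s := by
        have h2 : k ≤ ⌊q / s⌋₊ := by omega
        calc (k : ℝ) ≤ (⌊q / s⌋₊ : ℝ) := by exact_mod_cast h2
          _ ≤ q / s := Nat.floor_le (by positivity)
      have hqk : (k : ℝ) * s ≤ q := by
        calc (k : ℝ) * s ≤ (q / s) * s := by nlinarith
          _ = q := by field_simp
      have hqeq : q = (k : ℝ) * s := le_antisymm (hqD.trans hD) hqk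
      have hcast : ((i : ℕ) : ℝ) = (k : ℝ) - 1 := by
        rw [hieq]
        have : ((k - 1 : ℕ) : ℝ) = (k : ℝ) - 1 := by
          push_cast [Nat.cast_sub hk]
          ring
        rw [this]
      constructor
      · rw [hcast, hqeq]; nlinarith
      · rw [hcast, hqeq]; nlinarith
  rw [abs_le]
  constructor <;> [skip; skip] <;> push_cast <;> nlinarith [hbounds.1, hbounds.2]

set_option maxHeartbeats 1000000 in
theorem stmt_7 (p n m : ℕ) [NeZero n] (hm : 0 < m)
    (P : Set (EuclideanSpace ℝ (Fin p))) (hP : IsCompact P) (hPne : P.Nonempty)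
    (f : Fin n → EuclideanSpace ℝ (Fin p) → ℝ)
    (L l u : ℝ) (hL : 0 < L) (hlu : l < u)
    (hLip : ∀ i, ∀ x ∈ P, ∀ y ∈ P, |f i x - f i y| ≤ L * dist x y)
    (hbdd : ∀ i, ∀ x ∈ P, l ≤ f i x ∧ f i x ≤ u)
    (Fm : (Fin m → Fin n) → EuclideanSpace ℝ (Fin p) → ℝ)
    (hFm : ∀ ξ x, Fm ξ x = (1 / m : ℝ) * ∑ i, f (ξ i) x)
    (F : EuclideanSpace ℝ (Fin p) → ℝ) (hF : ∀ x, F x = (1 / n : ℝ) * ∑ i, f i x)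
    (xm : (Fin m → Fin n) → EuclideanSpace ℝ (Fin p))
    (hxm : ∀ ξ, xm ξ ∈ P ∧ IsMinOn (Fm ξ) P (xm ξ))
    (xstar : EuclideanSpace ℝ (Fin p)) (hxstar : xstar ∈ P ∧ IsMinOn F P xstar)
    (δ ε : ℝ) (hδ : 0 < δ) (hε : 0 < ε) (hεD : ε < Metric.diam P)
    (hεL : ε < δ / (2 * L)) :
    (Measure.pi fun _ : Fin m => (PMF.uniformOfFintype (Fin n)).toMeasure)
        {ξ | δ ≤ |Fm ξ (xm ξ) - F xstar|} ≤
      ENNReal.ofReal (2 * (Real.sqrt p) ^ p * (Metric.diam P / ε) ^ p *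
        Real.exp (-(2 * m * (δ - 2 * L * ε) ^ 2) / (u - l) ^ 2)) := by
  classical
  set D : ℝ := Metric.diam P with hDdef
  -- dispose of p = 0
  rcases Nat.eq_zero_or_pos p with hp0 | hp
  · exfalso
    subst hp0
    have hD0 : D ≤ 0 := by
      apply Metric.diam_le_of_forall_dist_le le_rfl
      intro x _ y _
      rw [EuclideanSpace.dist_eq]
      simp
    linarith
  have hn : 0 < (n : ℝ) := by exact_mod_cast Nat.pos_of_ne_zero (NeZero.ne n)
  have hmr : 0 < (m : ℝ) := by exact_mod_cast hm
  have hpr : (1 : ℝ) ≤ p := by exact_mod_cast hp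
  have hsp1 : 1 ≤ Real.sqrt p := by
    rw [show (1:ℝ) = Real.sqrt 1 from (Real.sqrt_one).symm]
    exact Real.sqrt_le_sqrt hpr
  have hsp : 0 < Real.sqrt p := lt_of_lt_of_le one_pos hsp1
  have hD0 : 0 < D := lt_trans hε hεD
  set a : ℝ := δ - 2 * L * ε with hadef
  have ha : 0 < a := by
    have h2L : 0 < 2 * L := by linarith
    have := (lt_div_iff₀ h2L).mp hεL
    rw [hadef]; nlinarith
  -- the Lipschitz extension g
  set g : Fin n → EuclideanSpace ℝ (Fin p) → ℝ :=
    fun i x => min u (sInf ((fun y => f i y + L * dist x y) '' P)) with hgdef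
  have hSne : ∀ (i : Fin n) (x : EuclideanSpace ℝ (Fin p)),
      ((fun y => f i y + L * dist x y) '' P).Nonempty := fun i x => hPne.image _
  have hSbdd : ∀ (i : Fin n) (x : EuclideanSpace ℝ (Fin p)),
      BddBelow ((fun y => f i y + L * dist x y) '' P) := by
    intro i x
    refine ⟨l, ?_⟩
    rintro z ⟨y, hy, rfl⟩
    have h1 := (hbdd i y hy).1
    have h2 : 0 ≤ L * dist x y := mul_nonneg hL.le dist_nonneg
    show l ≤ f i y + L * dist x y
    linarith
  have hgl : ∀ i x, l ≤ g i x := by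
    intro i x
    apply le_min hlu.le
    apply le_csInf (hSne i x)
    rintro z ⟨y, hy, rfl⟩
    have h1 := (hbdd i y hy).1
    have h2 : 0 ≤ L * dist x y := mul_nonneg hL.le dist_nonneg
    show l ≤ f i y + L * dist x y
    linarith
  have hgu : ∀ i x, g i x ≤ u := fun i x => min_le_left _ _
  have hgP : ∀ i, ∀ x ∈ P, g i x = f i x := by
    intro i x hx
    have h1 : sInf ((fun y => f i y + L * dist x y) '' P) = f i x := by
      apply le_antisymm
      · apply csInf_le (hSbdd i x)
        exact ⟨x, hx, by simp⟩
      · apply le_csInf (hSne i x)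
        rintro z ⟨y, hy, rfl⟩
        have h2 := hLip i x hx y hy
        have h3 : f i x - f i y ≤ L * dist x y := le_trans (le_abs_self _) h2
        show f i x ≤ f i y + L * dist x y
        linarith
    rw [hgdef]
    simp only [h1]
    exact min_eq_right (hbdd i x hx).2
  have hgLip : ∀ (i : Fin n) (x z : EuclideanSpace ℝ (Fin p)), |g i x - g i z| ≤ L * dist x z := by
    intro i x z
    refine le_trans (aux_min_lip u _ _) ?_
    have hside : ∀ x' z' : EuclideanSpace ℝ (Fin p),
        sInf ((fun y => f i y + L * dist x' y) '' P) -
          sInf ((fun y => f i y + L * dist z' y) '' P) ≤ L * dist x' z' := by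
      intro x' z'
      rw [sub_le_iff_le_add, add_comm]
      have : sInf ((fun y => f i y + L * dist x' y) '' P) - L * dist x' z'
          ≤ sInf ((fun y => f i y + L * dist z' y) '' P) := by
        apply le_csInf (hSne i z')
        rintro b ⟨y, hy, rfl⟩
        have h1 : sInf ((fun y => f i y + L * dist x' y) '' P) ≤ f i y + L * dist x' y :=
          csInf_le (hSbdd i x') ⟨y, hy, rfl⟩
        have h2 : dist x' y ≤ dist x' z' + dist z' y := dist_triangle _ _ _
        have h3 : L * dist x' y ≤ L * dist x' z' + L * dist z' y := by nlinarith
        show sInf ((fun y => f i y + L * dist x' y) '' P) - L * dist x' z'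
          ≤ f i y + L * dist z' y
        linarith
      linarith
    rw [abs_sub_le_iff]
    constructor
    · exact hside x z
    · rw [dist_comm]
      exact hside z x
  -- net parameters
  set s : ℝ := 2 * ε / Real.sqrt p with hsdef
  have hs : 0 < s := by rw [hsdef]; positivity
  set t : ℝ := Real.sqrt p * D / ε with htdef
  have hDε : 1 < D / ε := (one_lt_div hε).mpr hεD
  have ht1 : 1 < t := by
    rw [htdef, mul_div_assoc]
    nlinarith
  set k : ℕ := ⌈t / 2⌉₊ with hkdef
  have hk1 : 1 ≤ k := by
    rw [hkdef]
    exact Nat.ceil_pos.mpr (by positivity)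
  have hkt : (k : ℝ) ≤ t := by
    rcases le_or_gt t 2 with h | h
    · have : k ≤ 1 := by
        rw [hkdef]
        exact Nat.ceil_le.mpr (by linarith)
      calc (k : ℝ) ≤ 1 := by exact_mod_cast this
        _ ≤ t := ht1.le
    · have h1 : (k : ℝ) < t / 2 + 1 := by
        rw [hkdef]
        exact Nat.ceil_lt_add_one (by positivity)
      linarith
  have hks : D ≤ k * s := by
    have h1 : t / 2 ≤ (k : ℝ) := by rw [hkdef]; exact Nat.le_ceil _
    have h2 : t / 2 * s = D := by
      rw [htdef, hsdef]
      field_simp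
    calc D = t / 2 * s := h2.symm
      _ ≤ (k : ℝ) * s := by nlinarith
  -- coordinate bounds
  set A : Fin p → ℝ := fun j => sInf ((fun y : EuclideanSpace ℝ (Fin p) => y j) '' P) with hAdef
  have hAcomp : ∀ j, IsCompact ((fun y : EuclideanSpace ℝ (Fin p) => y j) '' P) :=
    fun j => hP.image (aux_proj_cont j)
  have hAne : ∀ j, ((fun y : EuclideanSpace ℝ (Fin p) => y j) '' P).Nonempty :=
    fun j => hPne.image _
  have hA1 : ∀ j, ∀ x ∈ P, A j ≤ x j :=
    fun j x hx => csInf_le (hAcomp j).bddBelow ⟨x, hx, rfl⟩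
  have hA2 : ∀ j, ∀ x ∈ P, x j ≤ A j + D := by
    intro j x hx
    obtain ⟨y, hyP, hyj⟩ : ∃ y ∈ P, y j = A j := by
      have h1 := (hAcomp j).sInf_mem (hAne j)
      obtain ⟨y, hy, he⟩ := h1
      exact ⟨y, hy, he⟩
    have h1 := aux_coord x y j
    have h2 : dist x y ≤ D := Metric.dist_le_diam_of_mem hP.isBounded hx hyP
    have h3 := (abs_le.mp h1).2
    linarith [hyj ▸ h3]
  -- the net
  set net : (Fin p → Fin k) → EuclideanSpace ℝ (Fin p) :=
    fun w => (WithLp.equiv 2 (Fin p → ℝ)).symm (fun j => A j + ((w j : ℝ) + 1/2) * s) with hnetdef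
  have hnetapp : ∀ w j, net w j = A j + ((w j : ℝ) + 1/2) * s := fun w j => rfl
  have hnet : ∀ x ∈ P, ∃ w : Fin p → Fin k, dist x (net w) ≤ ε := by
    intro x hx
    set w : Fin p → Fin k := fun j =>
      ⟨min ⌊(x j - A j) / s⌋₊ (k - 1), lt_of_le_of_lt (min_le_right _ _) (by omega)⟩ with hwdef
    refine ⟨w, ?_⟩
    have hcoord : ∀ j, |x j - net w j| ≤ s / 2 := by
      intro j
      have h1 := aux_cell hs (sub_nonneg.mpr (hA1 j x hx))
        (by linarith [hA2 j x hx] : x j - A j ≤ D) hks hk1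
      have h2 : net w j = A j + (((min ⌊(x j - A j) / s⌋₊ (k - 1) : ℕ) : ℝ) + 1/2) * s := by
        rw [hnetapp]
      rw [h2]
      calc |x j - (A j + (((min ⌊(x j - A j) / s⌋₊ (k - 1) : ℕ) : ℝ) + 1/2) * s)|
          = |(x j - A j) - (((min ⌊(x j - A j) / s⌋₊ (k - 1) : ℕ) : ℝ) + 1/2) * s| := by
            congr 1; ring
        _ ≤ s / 2 := h1
    rw [EuclideanSpace.dist_eq]
    have hsum : (∑ j, dist (x j) (net w j) ^ 2) ≤ p * (s/2)^2 := by
      calc (∑ j, dist (x j) (net w j) ^ 2) ≤ ∑ _j : Fin p, (s/2)^2 := by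
            apply Finset.sum_le_sum
            intro j _
            rw [Real.dist_eq]
            have := hcoord j
            nlinarith [abs_nonneg (x j - net w j)]
        _ = p * (s/2)^2 := by simp [mul_comm]
    calc Real.sqrt (∑ j, dist (x j) (net w j) ^ 2) ≤ Real.sqrt (p * (s/2)^2) :=
          Real.sqrt_le_sqrt hsum
      _ = Real.sqrt p * (s/2) := by
          rw [Real.sqrt_mul (by positivity : (0:ℝ) ≤ (p:ℝ))]
          rw [Real.sqrt_sq (by positivity : (0:ℝ) ≤ s/2)]
      _ = ε := by rw [hsdef]; field_simp
  -- event inclusion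
  have hmain : ∀ ξ : Fin m → Fin n, δ ≤ |Fm ξ (xm ξ) - F xstar| → ∃ w : Fin p → Fin k,
      a ≤ |(1/m : ℝ) * (∑ i, g (ξ i) (net w)) - (1/n : ℝ) * ∑ j, g j (net w)| := by
    intro ξ hξ
    obtain ⟨x, hxP, hx⟩ : ∃ x ∈ P, δ ≤ |Fm ξ x - F x| := by
      rcases le_abs.mp hξ with h | h
      · refine ⟨xstar, hxstar.1, ?_⟩
        have h1 : Fm ξ (xm ξ) ≤ Fm ξ xstar := isMinOn_iff.mp (hxm ξ).2 xstar hxstar.1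
        have h2 : δ ≤ Fm ξ xstar - F xstar := by linarith
        exact le_trans h2 (le_abs_self _)
      · refine ⟨xm ξ, (hxm ξ).1, ?_⟩
        have h1 : F xstar ≤ F (xm ξ) := isMinOn_iff.mp hxstar.2 (xm ξ) (hxm ξ).1
        have h2 : δ ≤ F (xm ξ) - Fm ξ (xm ξ) := by linarith
        have h3 : δ ≤ -(Fm ξ (xm ξ) - F (xm ξ)) := by linarith
        exact le_trans h3 (neg_le_abs _)
    obtain ⟨w, hw⟩ := hnet x hxP
    refine ⟨w, ?_⟩
    set Gm : EuclideanSpace ℝ (Fin p) → ℝ := fun z => (1/m : ℝ) * ∑ i, g (ξ i) z with hGm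
    set G : EuclideanSpace ℝ (Fin p) → ℝ := fun z => (1/n : ℝ) * ∑ j, g j z with hG
    have hGmP : Gm x = Fm ξ x := by
      rw [hGm, hFm]
      simp only []
      congr 1
      exact Finset.sum_congr rfl fun i _ => hgP (ξ i) x hxP
    have hGP : G x = F x := by
      rw [hG, hF]
      simp only []
      congr 1
      exact Finset.sum_congr rfl fun j _ => hgP j x hxP
    have hGmLip : |Gm x - Gm (net w)| ≤ L * dist x (net w) := by
      rw [hGm]
      simp only []
      rw [← mul_sub, ← Finset.sum_sub_distrib, abs_mul]
      have h1 : |∑ i, (g (ξ i) x - g (ξ i) (net w))| ≤ ∑ i : Fin m, L * dist x (net w) := by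
        refine le_trans (Finset.abs_sum_le_sum_abs _ _) ?_
        exact Finset.sum_le_sum fun i _ => hgLip (ξ i) x (net w)
      have h2 : ∑ _i : Fin m, L * dist x (net w) = m * (L * dist x (net w)) := by
        simp [mul_comm]
      rw [abs_of_pos (by positivity : (0:ℝ) < (1/m : ℝ))]
      calc (1/m : ℝ) * |∑ i, (g (ξ i) x - g (ξ i) (net w))|
          ≤ (1/m : ℝ) * (m * (L * dist x (net w))) := by
            apply mul_le_mul_of_nonneg_left _ (by positivity)
            rw [← h2]; exact h1
        _ = L * dist x (net w) := by field_simp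
    have hGLip : |G x - G (net w)| ≤ L * dist x (net w) := by
      rw [hG]
      simp only []
      rw [← mul_sub, ← Finset.sum_sub_distrib, abs_mul]
      have h1 : |∑ j, (g j x - g j (net w))| ≤ ∑ _j : Fin n, L * dist x (net w) := by
        refine le_trans (Finset.abs_sum_le_sum_abs _ _) ?_
        exact Finset.sum_le_sum fun j _ => hgLip j x (net w)
      have h2 : ∑ _j : Fin n, L * dist x (net w) = n * (L * dist x (net w)) := by
        simp [mul_comm]
      rw [abs_of_pos (by positivity : (0:ℝ) < (1/n : ℝ))]
      calc (1/n : ℝ) * |∑ j, (g j x - g j (net w))|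
          ≤ (1/n : ℝ) * (n * (L * dist x (net w))) := by
            apply mul_le_mul_of_nonneg_left _ (by positivity)
            rw [← h2]
            exact h1
        _ = L * dist x (net w) := by field_simp
    have hLd : L * dist x (net w) ≤ L * ε := mul_le_mul_of_nonneg_left hw hL.le
    have hdiff : |(Gm x - G x) - (Gm (net w) - G (net w))| ≤ 2 * L * ε := by
      calc |(Gm x - G x) - (Gm (net w) - G (net w))|
          = |(Gm x - Gm (net w)) - (G x - G (net w))| := by congr 1; ring
        _ ≤ |Gm x - Gm (net w)| + |G x - G (net w)| := abs_sub _ _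
        _ ≤ 2 * L * ε := by linarith
    have hXd : δ ≤ |Gm x - G x| := by rw [hGmP, hGP]; exact hx
    have habs : |Gm x - G x| - |Gm (net w) - G (net w)| ≤ 2 * L * ε :=
      le_trans (abs_sub_abs_le_abs_sub _ _) hdiff
    have : a ≤ |Gm (net w) - G (net w)| := by rw [hadef]; linarith
    exact this
  -- counting
  set T : Finset (Fin m → Fin n) :=
    Finset.univ.filter (fun ξ => δ ≤ |Fm ξ (xm ξ) - F xstar|) with hTdef
  set Ew : (Fin p → Fin k) → Finset (Fin m → Fin n) := fun w =>
    Finset.univ.filter (fun ξ : Fin m → Fin n =>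
      a ≤ |(1 / m : ℝ) * (∑ i, (fun j => g j (net w)) (ξ i)) -
        (1 / n : ℝ) * ∑ j, (fun j => g j (net w)) j|) with hEwdef
  have hTsub : T ⊆ Finset.univ.biUnion Ew := by
    intro ξ hξ
    rw [hTdef, Finset.mem_filter] at hξ
    obtain ⟨w, hw⟩ := hmain ξ hξ.2
    rw [Finset.mem_biUnion]
    refine ⟨w, Finset.mem_univ _, ?_⟩
    rw [hEwdef, Finset.mem_filter]
    exact ⟨Finset.mem_univ _, hw⟩
  set E : ℝ := Real.exp (-(2 * m * a ^ 2) / (u - l) ^ 2) with hEdef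
  have hEpos : 0 < E := Real.exp_pos _
  have hcount : (T.card : ℝ) ≤ (k : ℝ)^p * (2 * (n:ℝ)^m * E) := by
    have h1 : T.card ≤ ∑ w : Fin p → Fin k, (Ew w).card :=
      le_trans (Finset.card_le_card hTsub) (Finset.card_biUnion_le)
    have h2 : ∀ w : Fin p → Fin k, ((Ew w).card : ℝ) ≤ 2 * (n:ℝ)^m * E := by
      intro w
      have := aux_chernoff_abs hm (fun j => g j (net w)) l u hlu
        (fun j => ⟨hgl j (net w), hgu j (net w)⟩) a ha.le
      rw [hEwdef]
      exact this
    calc (T.card : ℝ) ≤ ∑ w : Fin p → Fin k, ((Ew w).card : ℝ) := by exact_mod_cast h1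
      _ ≤ ∑ _w : Fin p → Fin k, (2 * (n:ℝ)^m * E) := Finset.sum_le_sum fun w _ => h2 w
      _ = (k : ℝ)^p * (2 * (n:ℝ)^m * E) := by
          rw [Finset.sum_const, Finset.card_univ]
          simp [Fintype.card_fun, nsmul_eq_mul]
  -- measure computation
  have hST : {ξ : Fin m → Fin n | δ ≤ |Fm ξ (xm ξ) - F xstar|} = (T : Set (Fin m → Fin n)) := by
    ext ξ
    simp [hTdef]
  rw [hST]
  have hMeas : ∀ ξ : Fin m → Fin n, MeasurableSet ({ξ} : Set (Fin m → Fin n)) := by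
    intro ξ
    rw [← Set.univ_pi_singleton]
    exact MeasurableSet.univ_pi fun i => measurableSet_singleton _
  have hμT : (Measure.pi fun _ : Fin m => (PMF.uniformOfFintype (Fin n)).toMeasure)
      (T : Set (Fin m → Fin n)) = (T.card : ENNReal) * ((n : ENNReal))⁻¹ ^ m := by
    have hsingle : ∀ ξ : Fin m → Fin n,
        (Measure.pi fun _ : Fin m => (PMF.uniformOfFintype (Fin n)).toMeasure) {ξ}
          = ((n : ENNReal))⁻¹ ^ m := by
      intro ξ
      rw [← Set.univ_pi_singleton, Measure.pi_pi]
      have h3 : ∀ i : Fin m, (PMF.uniformOfFintype (Fin n)).toMeasure {ξ i}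
          = ((n : ENNReal))⁻¹ := by
        intro i
        rw [PMF.toMeasure_apply_singleton _ _ (measurableSet_singleton _)]
        simp [PMF.uniformOfFintype_apply]
      simp [h3]
    have hT2 : (T : Set (Fin m → Fin n)) = ⋃ ξ ∈ T, {ξ} := by ext z; simp
    rw [hT2, measure_biUnion_finset ?_ (fun b _ => hMeas b)]
    · simp only [hsingle, Finset.sum_const, nsmul_eq_mul]
    · intro x _ y _ hxy
      simp [Function.onFun, Set.disjoint_singleton, hxy]
  rw [hμT]
  have hconv : (T.card : ENNReal) * ((n : ENNReal))⁻¹ ^ m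
      = ENNReal.ofReal ((T.card : ℝ) * ((n:ℝ)⁻¹) ^ m) := by
    rw [ENNReal.ofReal_mul (by positivity), ENNReal.ofReal_pow (by positivity),
      ENNReal.ofReal_natCast, ENNReal.ofReal_inv_of_pos hn, ENNReal.ofReal_natCast]
  rw [hconv]
  apply ENNReal.ofReal_le_ofReal
  -- final real inequality
  have hkp : ((k : ℝ))^p ≤ (Real.sqrt p)^p * (D / ε)^p := by
    have h1 : ((k:ℝ))^p ≤ t^p := pow_le_pow_left₀ (by positivity) hkt p
    have h2 : t^p = (Real.sqrt p)^p * (D/ε)^p := by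
      rw [htdef, mul_div_assoc, mul_pow]
    linarith
  have hnm : ((n:ℝ)⁻¹)^m = ((n:ℝ)^m)⁻¹ := by rw [inv_pow]
  have hfinal : (T.card : ℝ) * ((n:ℝ)⁻¹)^m ≤
      2 * (Real.sqrt p)^p * (D / ε)^p * E := by
    rw [hnm]
    have hnmpos : 0 < (n:ℝ)^m := by positivity
    calc (T.card : ℝ) * ((n:ℝ)^m)⁻¹ ≤ ((k : ℝ)^p * (2 * (n:ℝ)^m * E)) * ((n:ℝ)^m)⁻¹ :=
          mul_le_mul_of_nonneg_right hcount (by positivity)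
      _ = (k : ℝ)^p * (2 * E) := by field_simp
      _ ≤ ((Real.sqrt p)^p * (D/ε)^p) * (2 * E) :=
          mul_le_mul_of_nonneg_right hkp (by positivity)
      _ = 2 * (Real.sqrt p)^p * (D / ε)^p * E := by ring
  exact hfinal
end
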